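/- Let T be a string of length n, i a position, and u·uᴿ the maximal even palindrome centered at i with radius r = |u|. If w·g·u₁·u₁ᴿ·wᴿ is any SAGP occurring in T with pivot i such that the palindrome part u₁·u₁ᴿ is a suffix-restricted part of the maximal palindrome (i.e., |u₁| ≤ r) and the character immediately following position i + r does not extend the palindrome, then the occurrence of this SAGP ends at a position between i + 2 and i + r. In other words, every SAGP for pivot i at a type-2 position ends at one of the positions i+2, ..., i + Pals[i]. -/

import Mathlib

/-- 1-based substring T[b..e]. -/
def sub (T : List Char) (b e : ℕ) : List Char := (T.drop (b-1)).take (e+1-b)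

/-- The string x occurs in T beginning at 1-based position p. -/
def occursAt (T x : List Char) (p : ℕ) : Prop := x <+: T.drop (p-1)

/-- T has an even palindrome of radius r centered at position i (i.e. T[i-r+1..i+r] is a palindrome). -/
def evenPalAt (T : List Char) (i r : ℕ) : Prop :=
  r ≤ i ∧ i + r ≤ T.length ∧ (sub T (i-r+1) (i+r)).reverse = sub T (i-r+1) (i+r)

/-- The SAGP w·g·u·uᴿ·wᴿ (w, g, u nonempty) occurs in T with pivot i. -/
def SAGPat (T : List Char) (i : ℕ) (w g u : List Char) : Prop :=
  w ≠ [] ∧ g ≠ [] ∧ u ≠ [] ∧ ∃ b, 1 ≤ b ∧ b + (w.length + g.length + u.length) = i + 1 ∧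
    occursAt T (w ++ g ++ u ++ u.reverse ++ w.reverse) b

/-- w·g·u·uᴿ·wᴿ is a longest SAGP for pivot i (maximal arm length |wu|). -/
def longestSAGP (T : List Char) (i : ℕ) (w g u : List Char) : Prop :=
  SAGPat T i w g u ∧ ∀ w' g' u', SAGPat T i w' g' u' → w'.length + u'.length ≤ w.length + u.length

/-- w·g·u·uᴿ·wᴿ is a canonical longest SAGP for pivot i (moreover |u| maximal among longest). -/
def canonSAGP (T : List Char) (i : ℕ) (w g u : List Char) : Prop :=
  longestSAGP T i w g u ∧ ∀ w' g' u', longestSAGP T i w' g' u' → u'.length ≤ u.length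

/-- Position i is of type-1: some SAGP for pivot i has u·uᴿ equal to the maximal even palindrome centered at i. -/
def type1 (T : List Char) (i : ℕ) : Prop :=
  ∃ w g u, SAGPat T i w g u ∧ ∀ r, evenPalAt T i r → r ≤ u.length

/-- At a type-2 position, the palindrome part of any SAGP is strictly shorter
than the maximal even palindrome. -/
lemma sagp_u_lt_r (T : List Char) (i r : ℕ)
    (hmax : ∀ r', evenPalAt T i r' → r' ≤ r)
    (h2 : ¬ type1 T i)
    {w g u : List Char} (hs : SAGPat T i w g u) : u.length < r := by
  by_contra h
  push_neg at h
  exact h2 ⟨w, g, u, hs, fun r' hr' => le_trans (hmax r' hr') h⟩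

/-- Concatenation of adjacent substrings. -/
lemma sub_append (T : List Char) (a m e : ℕ) (h1 : 1 ≤ a) (h2 : a ≤ m+1) (h3 : m ≤ e) :
    sub T a m ++ sub T (m+1) e = sub T a e := by
  unfold sub
  have hd : T.drop ((m+1)-1) = (T.drop (a-1)).drop (m+1-a) := by
    rw [List.drop_drop]; congr 1; omega
  rw [hd, ← List.take_add]
  congr 1
  omega

/-- Middle segment extraction from a prefix occurrence. -/
lemma mid_eq {X Y Z D : List Char} (h : X ++ (Y ++ Z) <+: D) :
    Y = (D.drop X.length).take Y.length := by
  obtain ⟨t, ht⟩ := h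
  rw [← ht, List.append_assoc, List.drop_left, List.append_assoc, List.take_left]

/-- every SAGP for pivot i at a type-2 position ends at one of the
positions i+2, ..., i+Pals[i]; i.e. 2 ≤ |w|+|u| ≤ Pals[i]. -/
theorem type2_SAGP_end_position (T : List Char) (i r : ℕ)
    (hpal : evenPalAt T i r) (hmax : ∀ r', evenPalAt T i r' → r' ≤ r)
    (h2 : ¬ type1 T i)
    (w g u : List Char) (hs : SAGPat T i w g u) :
    i + 2 ≤ i + u.length + w.length ∧ i + u.length + w.length ≤ i + r := by
  obtain ⟨hri, hrT, hP⟩ := hpal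
  have hpr : u.length < r := sagp_u_lt_r T i r hmax h2 hs
  obtain ⟨hw, hg, hu, b, hb1, hbeq, hocc⟩ := hs
  have hm : 1 ≤ w.length := List.length_pos_iff.mpr hw
  have hk : 1 ≤ g.length := List.length_pos_iff.mpr hg
  have hp : 1 ≤ u.length := List.length_pos_iff.mpr hu
  refine ⟨by omega, ?_⟩
  by_contra hcon
  push_neg at hcon
  -- so r < u.length + w.length
  have hrlt : r < u.length + w.length := by omega
  set m := w.length with hmdef
  set k := g.length with hkdef
  set p := u.length with hpdef
  set ℓ : ℕ := m + p - r with hldef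
  have hl1 : 1 ≤ ℓ := by omega
  have hlm : ℓ < m := by omega
  -- the palindrome halves
  set A : List Char := sub T (i-r+1) i with hAdef
  set B : List Char := sub T (i+1) (i+r) with hBdef
  have hAB : A ++ B = sub T (i-r+1) (i+r) :=
    sub_append T (i-r+1) i (i+r) (by omega) (by omega) (by omega)
  have hlenA : A.length = r := by
    rw [hAdef]; unfold sub
    rw [List.length_take, List.length_drop]
    omega
  have hlenB : B.length = r := by
    rw [hBdef]; unfold sub
    rw [List.length_take, List.length_drop]
    omega
  have hBA : B.reverse = A := by
    apply List.append_inj_left (t₁ := A.reverse) (t₂ := B)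
    · rw [← List.reverse_append, hAB, hP, ← hAB]
    · rw [List.length_reverse]; omega
  have hArev : A.reverse = B := by rw [← hBA, List.reverse_reverse]
  -- pieces of the occurrence
  set D : List Char := T.drop (b-1) with hDdef
  have hwD : w = D.take m := by
    have := mid_eq (X := ([] : List Char)) (Y := w) (Z := g ++ u ++ u.reverse ++ w.reverse)
      (D := D) (by simpa [List.append_assoc, occursAt, hDdef] using hocc)
    simpa using this
  have hwrD : w.reverse = (D.drop (m+(k+(p+p)))).take m := by
    have h := mid_eq (X := w ++ g ++ u ++ u.reverse) (Y := w.reverse) (Z := ([] : List Char))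
      (D := D) (by simpa [List.append_assoc, occursAt, hDdef] using hocc)
    simp only [List.length_append, List.length_reverse] at h
    rw [h]
    congr 2
    omega
  -- length bound from the occurrence
  have hTlen : i + p + m ≤ T.length := by
    have h1 := List.IsPrefix.length_le hocc
    simp only [List.length_append, List.length_reverse, List.length_drop] at h1
    omega
  -- the new SAGP
  set w₂ : List Char := w.take ℓ with hw2def
  set g' : List Char := sub T (b+ℓ) (i-r) with hg'def
  have hlenw2 : w₂.length = ℓ := by
    rw [hw2def, List.length_take]; omega
  have hleng' : g'.length = k := by
    rw [hg'def]; unfold sub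
    rw [List.length_take, List.length_drop]
    omega
  -- piece identifications as substrings of T
  have hw2sub : w₂ = sub T b (b+ℓ-1) := by
    rw [hw2def, hwD, List.take_take, min_eq_left (le_of_lt hlm)]
    unfold sub
    rw [hDdef]
    congr 1
    omega
  have husub : A = sub T (i-r+1) i := hAdef
  have hw2rev : w₂.reverse = sub T (i+r+1) (i+p+m) := by
    rw [hw2def, List.reverse_take, hwrD, List.drop_take, List.drop_drop]
    unfold sub
    rw [hDdef, List.drop_drop]
    congr 1
    · omega
    · congr 1
      omega
  -- assemble the occurrence
  have hassemble : w₂ ++ (g' ++ (A ++ (A.reverse ++ w₂.reverse))) = sub T b (i+p+m) := by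
    rw [hw2rev, hArev, hw2sub, hg'def, hAdef, hBdef]
    have e1 : sub T (i+1) (i+r) ++ sub T (i+r+1) (i+p+m) = sub T (i+1) (i+p+m) :=
      sub_append T (i+1) (i+r) (i+p+m) (by omega) (by omega) (by omega)
    have e2 : sub T (i-r+1) i ++ sub T (i+1) (i+p+m) = sub T (i-r+1) (i+p+m) :=
      sub_append T (i-r+1) i (i+p+m) (by omega) (by omega) (by omega)
    have e3 : sub T (b+ℓ) (i-r) ++ sub T (i-r+1) (i+p+m) = sub T (b+ℓ) (i+p+m) := by
      have := sub_append T (b+ℓ) (i-r) (i+p+m) (by omega) (by omega) (by omega)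
      simpa using this
    have e4 := sub_append T b (b+ℓ-1) (i+p+m) (by omega) (by omega) (by omega)
    rw [show b+ℓ-1+1 = b+ℓ from by omega] at e4
    rw [e1, e2, e3]
    exact e4
  have hnew : SAGPat T i w₂ g' A := by
    refine ⟨?_, ?_, ?_, b, hb1, ?_, ?_⟩
    · intro h; rw [h] at hlenw2; simp at hlenw2; omega
    · intro h; rw [h] at hleng'; simp at hleng'; omega
    · intro h; rw [h] at hlenA; simp at hlenA; omega
    · rw [hlenw2, hleng', hlenA]; omega
    · show w₂ ++ g' ++ A ++ A.reverse ++ w₂.reverse <+: T.drop (b-1)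
      have : w₂ ++ g' ++ A ++ A.reverse ++ w₂.reverse = sub T b (i+p+m) := by
        rw [← hassemble]; simp [List.append_assoc]
      rw [this]
      unfold sub
      exact List.take_prefix _ _
  have := sagp_u_lt_r T i r hmax h2 hnew
  omega
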